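/- The graph G constructed from p blocks (each block consisting of two copies of a (k−1,τ)-Ramsey graph H joined by a perfect matching, plus a clique Q = K_{τ−1} linking consecutive blocks in a ring by matchings), where V(G) is the set of all matching edges and adjacency is intersecting-matching-pairs, satisfies p·α(H) ≤ α(G) < 3p·α(H). -/

import Mathlib

open Finset

variable {V : Type*}

/-- `s` is an independent set of `G`. -/
def IsIndep (G : SimpleGraph V) (s : Finset V) : Prop :=
  ∀ u ∈ s, ∀ w ∈ s, u ≠ w → ¬ G.Adj u w

/-- The independence number `α(G)`. -/
noncomputable def indepNum [Fintype V] (G : SimpleGraph V) : ℕ :=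
  sSup {n | ∃ s : Finset V, s.card = n ∧ IsIndep G s}

/-- The clique number `ω(G)`. -/
noncomputable def cliqueNum [Fintype V] (G : SimpleGraph V) : ℕ :=
  sSup {n | ∃ s : Finset V, s.card = n ∧ G.IsClique ↑s}

/-- A graph is `k`-claw-free if it contains no induced `K_{1,k}`. -/
def IsClawFree (k : ℕ) (G : SimpleGraph V) : Prop :=
  ¬ ∃ (v : V) (s : Finset V), s.card = k ∧ (∀ u ∈ s, G.Adj v u) ∧
      ∀ u ∈ s, ∀ w ∈ s, u ≠ w → ¬ G.Adj u w

/-- Vertices of the auxiliary graph `G'`: block index `i : ZMod p` together with a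
vertex of the copy `H¹_i` of `H`, a vertex of the copy `H²_i` of `H`, or a vertex of
the clique `Q_i = K_{τ-1}`. -/
abbrev RingVert (V : Type*) (p τ : ℕ) := ZMod p × (V ⊕ V ⊕ Fin (τ - 1))

/-- Matching edges of `G'`: in block `i`, either the matching edge joining `v ∈ H¹_i`
to its copy in `H²_i`, or the matching edge joining the `j`-th matched vertex of
`H²_i` to the `j`-th vertex of `Q_i`, or the matching edge joining the `j`-th vertex
of `Q_i` to the `j`-th matched vertex of `H¹_{i+1}`. -/
abbrev RingEdge (V : Type*) (p τ : ℕ) := ZMod p × (V ⊕ Fin (τ - 1) ⊕ Fin (τ - 1))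

/-- The non-matching edges of `G'`: edges inside each copy `H¹_i` and `H²_i` of `H`,
and all edges inside each clique `Q_i`. -/
def ringBase (H : SimpleGraph V) (p τ : ℕ) : SimpleGraph (RingVert V p τ) :=
  SimpleGraph.fromRel (fun x y =>
    x.1 = y.1 ∧
      (match x.2, y.2 with
        | Sum.inl a, Sum.inl b => H.Adj a b
        | Sum.inr (Sum.inl a), Sum.inr (Sum.inl b) => H.Adj a b
        | Sum.inr (Sum.inr _), Sum.inr (Sum.inr _) => True
        | _, _ => False))

/-- The two endpoints in `G'` of a matching edge, where `f i : Fin (τ-1) ↪ V`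
selects the `τ-1` vertices of `H²_i` matched to `Q_i`, and `g i : Fin (τ-1) ↪ V`
selects the `τ-1` vertices of `H¹_i` matched to `Q_{i-1}`. -/
def ringEnds (p τ : ℕ) (f g : ZMod p → Fin (τ - 1) ↪ V) :
    RingEdge V p τ → Set (RingVert V p τ)
  | (i, Sum.inl v) => {(i, Sum.inl v), (i, Sum.inr (Sum.inl v))}
  | (i, Sum.inr (Sum.inl j)) => {(i, Sum.inr (Sum.inl (f i j))), (i, Sum.inr (Sum.inr j))}
  | (i, Sum.inr (Sum.inr j)) => {(i, Sum.inr (Sum.inr j)), (i + 1, Sum.inl (g (i + 1) j))}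

/-- The graph `G` of the ring-of-blocks construction: one vertex per matching edge of
`G'`, two vertices adjacent iff the corresponding matching edges do not form an
induced matching in `G'` (they share an endpoint or some edge of `G'` joins their
endpoint sets). -/
def ringGraph (H : SimpleGraph V) (p τ : ℕ) (f g : ZMod p → Fin (τ - 1) ↪ V) :
    SimpleGraph (RingEdge V p τ) :=
  SimpleGraph.fromRel (fun e e' =>
    ∃ x ∈ ringEnds p τ f g e, ∃ y ∈ ringEnds p τ f g e',
      x = y ∨ (ringBase H p τ).Adj x y)

section Helpers

lemma indep_bddAbove {W : Type*} [Fintype W] (G : SimpleGraph W) :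
    BddAbove {n | ∃ s : Finset W, s.card = n ∧ IsIndep G s} := by
  refine ⟨Fintype.card W, ?_⟩
  rintro n ⟨s, rfl, -⟩
  exact s.card_le_univ

lemma card_le_indepNum {W : Type*} [Fintype W] {G : SimpleGraph W} {s : Finset W}
    (h : IsIndep G s) : s.card ≤ indepNum G :=
  le_csSup (indep_bddAbove G) ⟨s, rfl, h⟩

lemma exists_max_indep {W : Type*} [Fintype W] (G : SimpleGraph W) :
    ∃ s : Finset W, s.card = indepNum G ∧ IsIndep G s := by
  have h : indepNum G ∈ {n | ∃ s : Finset W, s.card = n ∧ IsIndep G s} := by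
    apply Nat.sSup_mem
    · exact ⟨0, ∅, by simp, by intro u hu; simp at hu⟩
    · exact indep_bddAbove G
  obtain ⟨s, hs, hi⟩ := h
  exact ⟨s, hs, hi⟩

variable (H : SimpleGraph V) (p τ : ℕ) (f g : ZMod p → Fin (τ - 1) ↪ V)

lemma ringBase_adj_clique (i : ZMod p) {j j' : Fin (τ - 1)} (h : j ≠ j') :
    (ringBase H p τ).Adj (i, Sum.inr (Sum.inr j)) (i, Sum.inr (Sum.inr j')) := by
  rw [ringBase, SimpleGraph.fromRel_adj]
  exact ⟨by simp [h], Or.inl ⟨rfl, trivial⟩⟩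

lemma ringBase_adj_inl (i : ZMod p) {v w : V} (h : H.Adj v w) :
    (ringBase H p τ).Adj (i, Sum.inl v) (i, Sum.inl w) := by
  rw [ringBase, SimpleGraph.fromRel_adj]
  exact ⟨by simp [h.ne], Or.inl ⟨rfl, h⟩⟩

lemma ringGraph_adj_inl (i : ZMod p) {v w : V} (h : H.Adj v w) :
    (ringGraph H p τ f g).Adj (i, Sum.inl v) (i, Sum.inl w) := by
  rw [ringGraph, SimpleGraph.fromRel_adj]
  refine ⟨by simp [h.ne], Or.inl ⟨(i, Sum.inl v), ?_, (i, Sum.inl w), ?_,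
    Or.inr (ringBase_adj_inl H p τ i h)⟩⟩
  · simp [ringEnds]
  · simp [ringEnds]

lemma mem_ringEnds_inr (i : ZMod p) (x : Fin (τ - 1) ⊕ Fin (τ - 1)) :
    ((i, Sum.inr (Sum.inr (Sum.elim id id x))) : RingVert V p τ) ∈
      ringEnds p τ f g (i, Sum.inr x) := by
  cases x <;> simp [ringEnds]

lemma ringGraph_adj_inr (i : ZMod p) {x y : Fin (τ - 1) ⊕ Fin (τ - 1)} (h : x ≠ y) :
    (ringGraph H p τ f g).Adj (i, Sum.inr x) (i, Sum.inr y) := by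
  rw [ringGraph, SimpleGraph.fromRel_adj]
  refine ⟨by simp [h], Or.inl ⟨(i, Sum.inr (Sum.inr (Sum.elim id id x))),
    mem_ringEnds_inr p τ f g i x, (i, Sum.inr (Sum.inr (Sum.elim id id y))),
    mem_ringEnds_inr p τ f g i y, ?_⟩⟩
  by_cases hjj : Sum.elim id id x = Sum.elim id id y
  · exact Or.inl (by rw [hjj])
  · exact Or.inr (ringBase_adj_clique H p τ i hjj)

lemma ringBase_adj_inl_inl {i i' : ZMod p} {v w : V}
    (h : (ringBase H p τ).Adj (i, Sum.inl v) (i', Sum.inl w)) : H.Adj v w := by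
  rw [ringBase, SimpleGraph.fromRel_adj] at h
  rcases h.2 with ⟨-, h2⟩ | ⟨-, h2⟩
  · exact h2
  · exact h2.symm

lemma ringBase_not_adj_mixed {i i' : ZMod p} {v w : V} :
    ¬ (ringBase H p τ).Adj (i, Sum.inl v) (i', Sum.inr (Sum.inl w)) := by
  rw [ringBase, SimpleGraph.fromRel_adj]
  rintro ⟨-, ⟨-, h2⟩ | ⟨-, h2⟩⟩
  · exact h2
  · exact h2

lemma ringBase_adj_inrl_inrl {i i' : ZMod p} {v w : V}
    (h : (ringBase H p τ).Adj (i, Sum.inr (Sum.inl v)) (i', Sum.inr (Sum.inl w))) :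
    H.Adj v w := by
  rw [ringBase, SimpleGraph.fromRel_adj] at h
  rcases h.2 with ⟨-, h2⟩ | ⟨-, h2⟩
  · exact h2
  · exact h2.symm

lemma ringGraph_not_adj_inl {i i' : ZMod p} {v w : V} (hv : ¬ H.Adj v w) :
    ¬ (ringGraph H p τ f g).Adj (i, Sum.inl v) (i', Sum.inl w) := by
  have hw : ¬ H.Adj w v := fun h => hv h.symm
  rw [ringGraph, SimpleGraph.fromRel_adj]
  rintro ⟨hne, hrel⟩
  rcases hrel with ⟨x, hx, y, hy, hxy⟩ | ⟨x, hx, y, hy, hxy⟩ <;>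
  · simp only [ringEnds, Set.mem_insert_iff, Set.mem_singleton_iff] at hx hy
    rcases hx with rfl | rfl <;> rcases hy with rfl | rfl <;> rcases hxy with h | h
    · simp_all
    · first | exact hv (ringBase_adj_inl_inl H p τ h) | exact hw (ringBase_adj_inl_inl H p τ h)
    · simp_all
    · exact ringBase_not_adj_mixed H p τ h
    · simp_all
    · exact (ringBase_not_adj_mixed H p τ h.symm).elim
    · simp_all
    · first | exact hv (ringBase_adj_inrl_inrl H p τ h) | exact hw (ringBase_adj_inrl_inrl H p τ h)

end Helpers

/-- The ring-of-blocks graph `G` built from `p` blocks of a `(k−1,τ)`-Ramsey graph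
`H` (so `α(H) ≤ k−2` and `ω(H) ≤ τ−1`) satisfies `p·α(H) ≤ α(G) < 3p·α(H)`. -/
theorem ring_indepNum [Fintype V] [DecidableEq V] (H : SimpleGraph V)
    (k p τ : ℕ) [NeZero p] (hk : 4 ≤ k) (hτ : 3 ≤ τ)
    (hα : indepNum H ≤ k - 2) (hω : cliqueNum H ≤ τ - 1)
    (f g : ZMod p → Fin (τ - 1) ↪ V) :
    p * indepNum H ≤ indepNum (ringGraph H p τ f g) ∧
    indepNum (ringGraph H p τ f g) < 3 * p * indepNum H := by
  classical
  have hτ1 : 0 < τ - 1 := by omega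
  have v0 : V := f 0 ⟨0, hτ1⟩
  set a := indepNum H with ha
  set G := ringGraph H p τ f g with hG
  have ha1 : 1 ≤ a := by
    have h1 : ({v0} : Finset V).card ≤ a := by
      apply card_le_indepNum
      intro u hu w hw huw
      simp only [Finset.mem_singleton] at hu hw
      exact absurd (hu.trans hw.symm) huw
    simpa using h1
  have hp : 1 ≤ p := Nat.pos_of_ne_zero (NeZero.ne p)
  obtain ⟨S, hScard, hSind⟩ := exists_max_indep H
  -- Lower bound
  have lower : p * a ≤ indepNum G := by
    have hnadj : ∀ v ∈ S, ∀ w ∈ S, ¬ H.Adj v w := by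
      intro v hv w hw
      by_cases hvw : v = w
      · subst hvw; exact H.loopless.irrefl v
      · exact hSind v hv w hw hvw
    set T : Finset (RingEdge V p τ) :=
      Finset.univ ×ˢ S.map ⟨fun v => (Sum.inl v : V ⊕ Fin (τ - 1) ⊕ Fin (τ - 1)),
        fun a b h => by injection h⟩ with hT
    have hTcard : T.card = p * a := by
      rw [hT, Finset.card_product, Finset.card_map, Finset.card_univ, ZMod.card, hScard]
    have hTind : IsIndep G T := by
      rintro ⟨i, x⟩ hu ⟨i', y⟩ hw huw
      simp only [hT, Finset.mem_product, Finset.mem_map, Function.Embedding.coeFn_mk,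
        Finset.mem_univ, true_and] at hu hw
      obtain ⟨v, hv, rfl⟩ := hu
      obtain ⟨w, hw', rfl⟩ := hw
      exact ringGraph_not_adj_inl H p τ f g (hnadj v hv w hw')
    exact hTcard ▸ card_le_indepNum hTind
  -- Upper bound
  have key : ∀ s : Finset (RingEdge V p τ), IsIndep G s → s.card ≤ p * (a + 1) := by
    intro s hs
    have hcard : s.card = ∑ i : ZMod p, (s.filter (fun e => e.1 = i)).card :=
      Finset.card_eq_sum_card_fiberwise (fun x _ => Finset.mem_univ x.1)
    have hfib : ∀ i : ZMod p, (s.filter (fun e => e.1 = i)).card ≤ a + 1 := by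
      intro i
      set F := s.filter (fun e => e.1 = i) with hF
      set A := F.filter (fun e => e.2.isLeft) with hA
      set B := F.filter (fun e => ¬ e.2.isLeft) with hB
      have hsplit : A.card + B.card = F.card :=
        Finset.card_filter_add_card_filter_not _
      have hAmem : ∀ e ∈ A, e ∈ s ∧ ∃ v : V, e = (i, Sum.inl v) := by
        rintro ⟨j, x⟩ he
        simp only [hA, hF, Finset.mem_filter] at he
        obtain ⟨⟨hes, h1⟩, h2⟩ := he
        cases x with
        | inl v => exact ⟨hes, v, by simp [h1]⟩
        | inr x => simp at h2
      have hBmem : ∀ e ∈ B, e ∈ s ∧ ∃ x, e = (i, Sum.inr x) := by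
        rintro ⟨j, x⟩ he
        simp only [hB, hF, Finset.mem_filter] at he
        obtain ⟨⟨hes, h1⟩, h2⟩ := he
        cases x with
        | inl v => simp at h2
        | inr x => exact ⟨hes, x, by simp [h1]⟩
      have hBle : B.card ≤ 1 := by
        refine Finset.card_le_one.2 ?_
        intro e he e' he'
        obtain ⟨hes, x, hex⟩ := hBmem e he
        obtain ⟨hes', x', hex'⟩ := hBmem e' he'
        by_contra hne
        have hxx : x ≠ x' := by
          intro hh; apply hne; rw [hex, hex', hh]
        exact hs e hes e' hes' hne
          (by rw [hex, hex']; exact ringGraph_adj_inr H p τ f g i hxx)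
      have hAle : A.card ≤ a := by
        set φ : RingEdge V p τ → V := fun e => Sum.elim id (fun _ => v0) e.2 with hφ
        have hφval : ∀ (v : V), φ (i, Sum.inl v) = v := fun v => rfl
        have hinj : Set.InjOn φ A := by
          intro e he e' he' hφe
          obtain ⟨-, v, hev⟩ := hAmem e he
          obtain ⟨-, v', hev'⟩ := hAmem e' he'
          rw [hev, hev', hφval, hφval] at hφe
          rw [hev, hev', hφe]
        rw [← Finset.card_image_of_injOn hinj]
        apply card_le_indepNum (G := H)
        intro u hu w hw huw hadj
        simp only [Finset.mem_image] at hu hw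
        obtain ⟨e, he, rfl⟩ := hu
        obtain ⟨e', he', rfl⟩ := hw
        obtain ⟨hes, v, hev⟩ := hAmem e he
        obtain ⟨hes', v', hev'⟩ := hAmem e' he'
        have h1 : φ e = v := by rw [hev, hφval]
        have h2 : φ e' = v' := by rw [hev', hφval]
        rw [h1, h2] at hadj huw
        have hne : e ≠ e' := by
          intro hh; apply huw; rw [h1.symm, h2.symm, hh]
        exact hs e hes e' hes' hne
          (by rw [hev, hev']; exact ringGraph_adj_inl H p τ f g i hadj)
      omega
    rw [hcard]
    calc ∑ i : ZMod p, (s.filter (fun e => e.1 = i)).card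
        ≤ ∑ _i : ZMod p, (a + 1) := Finset.sum_le_sum (fun i _ => hfib i)
      _ = p * (a + 1) := by
          rw [Finset.sum_const, Finset.card_univ, ZMod.card, smul_eq_mul]
  have upper : indepNum G ≤ p * (a + 1) := by
    have hne0 : {n | ∃ s : Finset (RingEdge V p τ), s.card = n ∧ IsIndep G s}.Nonempty :=
      ⟨0, ∅, by simp, by intro u hu; exact absurd hu (Finset.notMem_empty u)⟩
    apply csSup_le hne0
    rintro n ⟨s, rfl, hsind⟩
    exact key s hsind
  refine ⟨lower, lt_of_le_of_lt upper ?_⟩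
  nlinarith [ha1, hp]
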